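/- Let E be a real normed vector space, M ≥ 0, θ_c > 0, and let g : (0, ∞) → E be twice differentiable with ‖g(θ)‖ ≤ M, ‖g'(θ)‖ ≤ M / max(θ, 1), and ‖g''(θ)‖ ≤ M for every θ > 0. Then for every θ > 0 one has the Taylor-type estimate ‖g(θ) − g(θ_c) − min(θ − θ_c, 1) · g'(θ_c)‖ ≤ 3 M · min((θ − θ_c)², 1). -/

import Mathlib

/-- One-variable Taylor-remainder estimate: if `g : (0,∞) → E` is twice
differentiable with `‖g(θ)‖ ≤ M`, `‖g'(θ)‖ ≤ M / max(θ,1)`, and `‖g''(θ)‖ ≤ M`,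
then `‖g(θ) − g(θ_c) − min(θ − θ_c, 1) g'(θ_c)‖ ≤ 3 M min((θ − θ_c)², 1)` for all
`θ > 0`. -/
theorem taylor_remainder_bound {E : Type*} [NormedAddCommGroup E]
    [NormedSpace ℝ E] (M θc : ℝ) (hM : 0 ≤ M) (hθc : 0 < θc)
    (g g' g'' : ℝ → E)
    (hg' : ∀ θ : ℝ, 0 < θ → HasDerivAt g (g' θ) θ)
    (hg'' : ∀ θ : ℝ, 0 < θ → HasDerivAt g' (g'' θ) θ)
    (hgbd : ∀ θ : ℝ, 0 < θ → ‖g θ‖ ≤ M)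
    (hg'bd : ∀ θ : ℝ, 0 < θ → ‖g' θ‖ ≤ M / max θ 1)
    (hg''bd : ∀ θ : ℝ, 0 < θ → ‖g'' θ‖ ≤ M) :
    ∀ θ : ℝ, 0 < θ →
      ‖g θ - g θc - min (θ - θc) 1 • g' θc‖ ≤ 3 * M * min ((θ - θc) ^ 2) 1 := by
  intro θ hθ
  set a := min θ θc with ha_def
  set b := max θ θc with hb_def
  have ha : 0 < a := lt_min hθ hθc
  have hsub : Set.Icc a b ⊆ Set.Ioi (0:ℝ) := fun x hx => lt_of_lt_of_le ha hx.1
  have hconv : Convex ℝ (Set.Icc a b) := convex_Icc a b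
  have hθmem : θ ∈ Set.Icc a b := ⟨min_le_left _ _, le_max_left _ _⟩
  have hθcmem : θc ∈ Set.Icc a b := ⟨min_le_right _ _, le_max_right _ _⟩
  have hba : b - a = |θ - θc| := by
    simp only [ha_def, hb_def]
    rcases le_total θ θc with h | h
    · rw [min_eq_left h, max_eq_right h, abs_of_nonpos (by linarith : θ - θc ≤ 0)]; ring
    · rw [min_eq_right h, max_eq_left h, abs_of_nonneg (by linarith : (0:ℝ) ≤ θ - θc)]
  have hlip : ∀ x ∈ Set.Icc a b, ‖g' x - g' θc‖ ≤ M * |θ - θc| := by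
    intro x hx
    have h1 : ‖g' x - g' θc‖ ≤ M * ‖x - θc‖ :=
      hconv.norm_image_sub_le_of_norm_hasDerivWithin_le
        (fun y hy => (hg'' y (hsub hy)).hasDerivWithinAt)
        (fun y hy => hg''bd y (hsub hy)) hθcmem hx
    refine h1.trans (mul_le_mul_of_nonneg_left ?_ hM)
    rw [Real.norm_eq_abs, ← hba]
    rw [abs_sub_le_iff]
    constructor <;> linarith [hx.1, hx.2, hθcmem.1, hθcmem.2]
  have key : ‖g θ - g θc - (θ - θc) • g' θc‖ ≤ M * |θ - θc| * |θ - θc| := by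
    have hd : ∀ y ∈ Set.Icc a b,
        HasDerivWithinAt (fun t => g t - t • g' θc) (g' y - g' θc) (Set.Icc a b) y := by
      intro y hy
      have h1 := (hg' y (hsub hy)).sub ((hasDerivAt_id y).smul_const (g' θc))
      simpa [Pi.sub_def] using h1.hasDerivWithinAt
    have h2 := hconv.norm_image_sub_le_of_norm_hasDerivWithin_le hd hlip hθcmem hθmem
    have h3 : g θ - θ • g' θc - (g θc - θc • g' θc) = g θ - g θc - (θ - θc) • g' θc := by
      rw [sub_smul]; abel
    rw [h3] at h2
    refine h2.trans ?_
    rw [Real.norm_eq_abs]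
  rcases le_or_gt |θ - θc| 1 with h1 | h1
  · have hmin1 : min (θ - θc) 1 = θ - θc := min_eq_left (le_trans (le_abs_self _) h1)
    have hsq : (θ - θc) ^ 2 ≤ 1 := by
      rw [← sq_abs]; nlinarith [abs_nonneg (θ - θc)]
    rw [hmin1, min_eq_left hsq]
    have : M * |θ - θc| * |θ - θc| = M * (θ - θc) ^ 2 := by
      rw [← sq_abs]; ring
    nlinarith [key, sq_nonneg (θ - θc), mul_nonneg hM (sq_nonneg (θ - θc))]
  · have hsq : (1:ℝ) ≤ (θ - θc) ^ 2 := by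
      rw [← sq_abs]; nlinarith
    rw [min_eq_right hsq]
    have hbd1 : ‖g θ - g θc - min (θ - θc) 1 • g' θc‖ ≤
        ‖g θ‖ + ‖g θc‖ + |min (θ - θc) 1| * ‖g' θc‖ := by
      calc ‖g θ - g θc - min (θ - θc) 1 • g' θc‖
          ≤ ‖g θ - g θc‖ + ‖min (θ - θc) 1 • g' θc‖ := norm_sub_le _ _
        _ ≤ ‖g θ‖ + ‖g θc‖ + |min (θ - θc) 1| * ‖g' θc‖ := by
            rw [norm_smul, Real.norm_eq_abs]
            exact add_le_add (norm_sub_le _ _) le_rfl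
    have hlast : |min (θ - θc) 1| * ‖g' θc‖ ≤ M := by
      rcases le_total 0 (θ - θc) with h2 | h2
      · have : min (θ - θc) 1 = 1 := min_eq_right (by nlinarith [abs_of_nonneg h2])
        rw [this, abs_one, one_mul]
        exact (hg'bd θc hθc).trans (div_le_self hM (le_max_right _ _))
      · have hm : min (θ - θc) 1 = θ - θc := min_eq_left (by linarith)
        have habs : |θ - θc| = θc - θ := by rw [abs_of_nonpos h2]; ring
        have hθc1 : 1 < θc := by rw [habs] at h1; linarith
        have hmax : max θc 1 = θc := max_eq_left hθc1.le
        have hg'b : ‖g' θc‖ ≤ M / θc := by have := hg'bd θc hθc; rwa [hmax] at this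
        rw [hm, habs]
        calc (θc - θ) * ‖g' θc‖ ≤ (θc - θ) * (M / θc) :=
              mul_le_mul_of_nonneg_left hg'b (by linarith)
          _ ≤ M := by
              rw [div_eq_mul_inv]
              rw [show (θc - θ) * (M * θc⁻¹) = M * ((θc - θ) / θc) by ring]
              nlinarith [div_le_one_of_le₀ (by linarith : θc - θ ≤ θc) hθc.le]
    have := hgbd θ hθ
    have := hgbd θc hθc
    linarith
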